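/- (Minimum achievable MSE, Eq. (11).) Under the setting of Proposition 1 (independent standard Bernoulli(1/2) variables X_1,…,X_K, independent Gaussian noise N with mean 0 and variance σ²/2 > 0, nonempty S with |S| = m, p > 0, r = ∑_{k=1}^K X_k, y = 2√p ∑_{k∈S} X_k − √p·m + N), the minimum mean squared error attained by the LMMSE detector r̂ = λ*y + μ* with λ* = √p·m/(2p·m + σ²) and μ* = K/2 equals E[(r − r̂)²] = (2p·m·(K − m) + K·σ²)/(8p·m + 4σ²). -/

import Mathlib

open MeasureTheory ProbabilityTheory Real
open scoped NNReal ENNReal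

/-! ### Auxiliary lemmas on the Gaussian measure -/

private lemma lmmse_rpow_two_eq (x : ℝ) : x ^ (2:ℝ) = x ^ 2 := by
  rw [show (2:ℝ) = ((2:ℕ):ℝ) by norm_num, Real.rpow_natCast]

private lemma lmmse_gauss_pdf_eq (v : ℝ≥0) (x : ℝ) :
    gaussianPDFReal 0 v x = (√(2 * π * v))⁻¹ * rexp (-(2 * (v:ℝ))⁻¹ * x ^ 2) := by
  rw [gaussianPDFReal, sub_zero]
  congr 1
  rw [neg_div, neg_mul]
  congr 1
  rw [div_eq_inv_mul]

private lemma lmmse_gauss_integrable_x (v : ℝ≥0) (hv : v ≠ 0) :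
    Integrable (fun x => gaussianPDFReal 0 v x * x) (volume : Measure ℝ) := by
  have hvpos : (0:ℝ) < v := lt_of_le_of_ne v.coe_nonneg (by exact_mod_cast hv.symm)
  have hb : 0 < (2 * (v:ℝ))⁻¹ := by positivity
  have h := (integrable_rpow_mul_exp_neg_mul_sq hb (s := 1) (by norm_num)).const_mul
      (√(2 * π * v))⁻¹
  refine h.congr ?_
  filter_upwards with x
  rw [Real.rpow_one, lmmse_gauss_pdf_eq]
  ring

private lemma lmmse_gauss_integrable_sq (v : ℝ≥0) (hv : v ≠ 0) :
    Integrable (fun x => gaussianPDFReal 0 v x * x ^ 2) (volume : Measure ℝ) := by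
  have hvpos : (0:ℝ) < v := lt_of_le_of_ne v.coe_nonneg (by exact_mod_cast hv.symm)
  have hb : 0 < (2 * (v:ℝ))⁻¹ := by positivity
  have h := (integrable_rpow_mul_exp_neg_mul_sq hb (s := 2) (by norm_num)).const_mul
      (√(2 * π * v))⁻¹
  refine h.congr ?_
  filter_upwards with x
  rw [lmmse_rpow_two_eq, lmmse_gauss_pdf_eq]
  ring

private lemma lmmse_gauss_transfer (v : ℝ≥0) (hv : v ≠ 0) (f : ℝ → ℝ) :
    ∫ x, f x ∂(gaussianReal 0 v) = ∫ x, gaussianPDFReal 0 v x * f x := by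
  rw [gaussianReal_of_var_ne_zero _ hv]
  have h1 : gaussianPDF 0 v = fun x =>
      (((gaussianPDFReal 0 v x).toNNReal : ℝ≥0) : ℝ≥0∞) := by
    funext x; rfl
  rw [h1, integral_withDensity_eq_integral_smul
    ((measurable_gaussianPDFReal 0 v).real_toNNReal)]
  congr 1
  funext x
  rw [NNReal.smul_def, smul_eq_mul, Real.coe_toNNReal _ (gaussianPDFReal_nonneg 0 v x)]

private lemma lmmse_gauss_pdf_even (v : ℝ≥0) (x : ℝ) :
    gaussianPDFReal 0 v (-x) = gaussianPDFReal 0 v x := by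
  simp [gaussianPDFReal, neg_sq]

private lemma lmmse_gauss_mean (v : ℝ≥0) (hv : v ≠ 0) :
    ∫ x, x ∂(gaussianReal 0 v) = 0 := by
  rw [lmmse_gauss_transfer v hv]
  set g : ℝ → ℝ := fun x => gaussianPDFReal 0 v x * x with hg
  have hmeas : Measurable g := (measurable_gaussianPDFReal 0 v).mul measurable_id
  have h1 : ∫ x, g x = ∫ x, g (-x) := by
    conv_lhs => rw [← Measure.map_neg_eq_self (volume : Measure ℝ)]
    exact integral_map measurable_neg.aemeasurable
      (by rw [Measure.map_neg_eq_self]; exact hmeas.aestronglyMeasurable)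
  have h2 : (fun x => g (-x)) = fun x => - g x := by
    funext x
    simp only [hg, lmmse_gauss_pdf_even, mul_neg]
  rw [h2, integral_neg] at h1
  linarith

private lemma lmmse_gauss_sq_moment (v : ℝ≥0) (hv : v ≠ 0) :
    ∫ x, x ^ 2 ∂(gaussianReal 0 v) = (v : ℝ) := by
  have hvpos : (0:ℝ) < v := lt_of_le_of_ne v.coe_nonneg (by exact_mod_cast hv.symm)
  set t : ℝ := 2 * (v:ℝ) with htdef
  have ht : 0 < t := by positivity
  have hb : (0:ℝ) < t⁻¹ := by positivity
  rw [lmmse_gauss_transfer v hv]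
  have step1 : ∫ x, gaussianPDFReal 0 v x * x ^ 2
      = (√(2 * π * v))⁻¹ * ∫ x, x ^ 2 * rexp (-t⁻¹ * x ^ 2) := by
    rw [← integral_const_mul]
    congr 1
    funext x
    rw [lmmse_gauss_pdf_eq]
    ring
  have step2 : ∫ x, x ^ 2 * rexp (-t⁻¹ * x ^ 2)
      = 2 * ∫ x in Set.Ioi (0:ℝ), x ^ 2 * rexp (-t⁻¹ * x ^ 2) := by
    rw [← integral_comp_abs (f := fun x => x ^ 2 * rexp (-t⁻¹ * x ^ 2))]
    congr 1
    funext x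
    rw [sq_abs]
  have step3 : ∫ x in Set.Ioi (0:ℝ), x ^ 2 * rexp (-t⁻¹ * x ^ 2)
      = t⁻¹ ^ (-(3:ℝ)/2) * (1/2) * Real.Gamma (3/2) := by
    have := integral_rpow_mul_exp_neg_mul_rpow (p := 2) (q := 2) (b := t⁻¹)
      (by norm_num) (by norm_num) hb
    simp only [lmmse_rpow_two_eq] at this
    rw [this]
    norm_num
  have hGamma : Real.Gamma (3/2) = √π / 2 := by
    rw [show (3:ℝ)/2 = 1/2 + 1 by norm_num, Real.Gamma_add_one (by norm_num),
      Real.Gamma_one_half_eq]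
    ring
  have hpow : t⁻¹ ^ (-(3:ℝ)/2) = t * √t := by
    rw [Real.inv_rpow ht.le, ← Real.rpow_neg ht.le,
      show (-(-(3:ℝ)/2)) = 1 + 1/2 by norm_num, Real.rpow_add ht,
      Real.rpow_one, Real.sqrt_eq_rpow]
  have hsqrt : √(2 * π * v) = √π * √t := by
    rw [show 2 * π * (v:ℝ) = π * t by rw [htdef]; ring, Real.sqrt_mul pi_pos.le]
  rw [step1, step2, step3, hGamma, hpow, hsqrt]
  have h1 : √π > 0 := Real.sqrt_pos.mpr pi_pos
  have h2 : √t > 0 := Real.sqrt_pos.mpr ht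
  have h3 : (v:ℝ) = t / 2 := by rw [htdef]; ring
  rw [h3]
  field_simp

private lemma lmmse_gauss_integrable (v : ℝ≥0) (hv : v ≠ 0) (f : ℝ → ℝ)
    (hint : Integrable (fun x => gaussianPDFReal 0 v x * f x) (volume : Measure ℝ)) :
    Integrable f (gaussianReal 0 v) := by
  rw [gaussianReal_of_var_ne_zero _ hv,
    integrable_withDensity_iff (measurable_gaussianPDF 0 v)
      (ae_of_all _ fun x => ENNReal.ofReal_lt_top)]
  refine hint.congr ?_
  filter_upwards with x
  rw [gaussianPDF, ENNReal.toReal_ofReal (gaussianPDFReal_nonneg 0 v x)]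
  ring

private lemma lmmse_gauss_memL2 (v : ℝ≥0) (hv : v ≠ 0) :
    MemLp (id : ℝ → ℝ) 2 (gaussianReal 0 v) := by
  refine (memLp_two_iff_integrable_sq aestronglyMeasurable_id).mpr ?_
  exact lmmse_gauss_integrable v hv _ (lmmse_gauss_integrable_sq v hv)

/-! ### L² products -/

private lemma lmmse_integrable_mul {Ω : Type*} [MeasurableSpace Ω] {μ : Measure Ω}
    {f g : Ω → ℝ} (hf : MemLp f 2 μ) (hg : MemLp g 2 μ) :
    Integrable (fun ω => f ω * g ω) μ := by
  have h : MemLp (g • f) 1 μ := hf.smul (𝕜 := ℝ) hg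
  exact (memLp_one_iff_integrable.mp h).congr
    (ae_of_all _ fun ω => by simp [mul_comm])

/-! ### Expansion of the quadratic integral -/

private lemma lmmse_expand_sq {Ω : Type*} [MeasurableSpace Ω] (μ : Measure Ω)
    [IsProbabilityMeasure μ] (f g h : Ω → ℝ) (a c d : ℝ)
    (hf : MemLp f 2 μ) (hg : MemLp g 2 μ) (hh : MemLp h 2 μ) :
    ∫ ω, (a * f ω + g ω + c * h ω + d) ^ 2 ∂μ
      = a^2 * (∫ ω, f ω^2 ∂μ) + (∫ ω, g ω^2 ∂μ) + c^2 * (∫ ω, h ω^2 ∂μ) + d^2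
        + 2*a*(∫ ω, f ω * g ω ∂μ) + 2*a*c*(∫ ω, f ω * h ω ∂μ)
        + 2*c*(∫ ω, g ω * h ω ∂μ)
        + 2*a*d*(∫ ω, f ω ∂μ) + 2*d*(∫ ω, g ω ∂μ) + 2*c*d*(∫ ω, h ω ∂μ) := by
  have if2 := hf.integrable_sq
  have ig2 := hg.integrable_sq
  have ih2 := hh.integrable_sq
  have ifg := lmmse_integrable_mul hf hg
  have ifh := lmmse_integrable_mul hf hh
  have igh := lmmse_integrable_mul hg hh
  have if1 := hf.integrable one_le_two
  have ig1 := hg.integrable one_le_two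
  have ih1 := hh.integrable one_le_two
  have hpt : ∀ ω, (a * f ω + g ω + c * h ω + d)^2 =
      a^2 * f ω^2 + (g ω^2 + (c^2 * h ω^2 + ((2*a)*(f ω * g ω) + ((2*a*c)*(f ω * h ω)
        + ((2*c)*(g ω * h ω) + ((2*a*d)*(f ω) + ((2*d)*(g ω) + ((2*c*d)*(h ω)
        + d^2)))))))) := fun ω => by ring
  have I9 : Integrable (fun ω => (2*c*d)*(h ω) + d^2) μ :=
    (ih1.const_mul _).add (integrable_const _)
  have I8 : Integrable (fun ω => (2*d)*(g ω) + ((2*c*d)*(h ω) + d^2)) μ :=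
    (ig1.const_mul _).add I9
  have I7 : Integrable (fun ω => (2*a*d)*(f ω) + ((2*d)*(g ω) + ((2*c*d)*(h ω) + d^2))) μ :=
    (if1.const_mul _).add I8
  have I6 : Integrable (fun ω => (2*c)*(g ω * h ω) + ((2*a*d)*(f ω) + ((2*d)*(g ω)
      + ((2*c*d)*(h ω) + d^2)))) μ := (igh.const_mul _).add I7
  have I5 : Integrable (fun ω => (2*a*c)*(f ω * h ω) + ((2*c)*(g ω * h ω) + ((2*a*d)*(f ω)
      + ((2*d)*(g ω) + ((2*c*d)*(h ω) + d^2))))) μ := (ifh.const_mul _).add I6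
  have I4 : Integrable (fun ω => (2*a)*(f ω * g ω) + ((2*a*c)*(f ω * h ω) + ((2*c)*(g ω * h ω)
      + ((2*a*d)*(f ω) + ((2*d)*(g ω) + ((2*c*d)*(h ω) + d^2)))))) μ := (ifg.const_mul _).add I5
  have I3 : Integrable (fun ω => c^2 * h ω^2 + ((2*a)*(f ω * g ω) + ((2*a*c)*(f ω * h ω)
      + ((2*c)*(g ω * h ω) + ((2*a*d)*(f ω) + ((2*d)*(g ω) + ((2*c*d)*(h ω) + d^2))))))) μ :=
    (ih2.const_mul _).add I4
  have I2 : Integrable (fun ω => g ω^2 + (c^2 * h ω^2 + ((2*a)*(f ω * g ω)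
      + ((2*a*c)*(f ω * h ω) + ((2*c)*(g ω * h ω) + ((2*a*d)*(f ω) + ((2*d)*(g ω)
      + ((2*c*d)*(h ω) + d^2)))))))) μ := ig2.add I3
  simp_rw [hpt]
  rw [integral_add (if2.const_mul _) I2, integral_add ig2 I3,
    integral_add (ih2.const_mul _) I4, integral_add (ifg.const_mul _) I5,
    integral_add (ifh.const_mul _) I6, integral_add (igh.const_mul _) I7,
    integral_add (if1.const_mul _) I8, integral_add (ig1.const_mul _) I9,
    integral_add (ih1.const_mul _) (integrable_const _),
    integral_const_mul, integral_const_mul, integral_const_mul, integral_const_mul,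
    integral_const_mul, integral_const_mul, integral_const_mul, integral_const_mul,
    integral_const]
  simp only [measureReal_def, measure_univ, ENNReal.toReal_one, smul_eq_mul, one_mul]
  ring


/-- minimum achievable MSE, Eq. (11): in the setting of
Proposition 1, the LMMSE detector `r̂ = λ* y + μ*` with
`λ* = √p·m/(2p·m + σ²)` and `μ* = K/2` attains the mean squared error
`(2p·m·(K − m) + K·σ²)/(8p·m + 4σ²)`. -/
theorem lmmse_minimum_mse {Ω : Type*} [MeasurableSpace Ω]
    (μ : Measure Ω) [IsProbabilityMeasure μ]
    (K : ℕ) (hK : 1 ≤ K) (X : Fin K → Ω → ℝ) (N : Ω → ℝ)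
    (hXmeas : ∀ k, Measurable (X k)) (hNmeas : Measurable N)
    (hindep : iIndepFun X μ)
    (hBern : ∀ k, μ (X k ⁻¹' {1}) = 1 / 2 ∧ μ (X k ⁻¹' {0}) = 1 / 2)
    (σ2 : ℝ≥0) (hσ : 0 < σ2)
    (hN : μ.map N = gaussianReal 0 (σ2 / 2))
    (hNindep : IndepFun (fun ω k => X k ω) N μ)
    (S : Finset (Fin K)) (hS : S.Nonempty) (m : ℕ) (hm : S.card = m)
    (p : ℝ) (hp : 0 < p) :
    ∫ ω, ((∑ k, X k ω) -
        ((Real.sqrt p * m / (2 * p * m + (σ2 : ℝ))) *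
            (2 * Real.sqrt p * (∑ k ∈ S, X k ω) - Real.sqrt p * m + N ω)
          + (K : ℝ) / 2)) ^ 2 ∂μ
      = (2 * p * m * ((K : ℝ) - m) + K * (σ2 : ℝ)) / (8 * p * m + 4 * (σ2 : ℝ)) := by
  classical
  have hσR : (0:ℝ) < (σ2:ℝ) := hσ
  have hv : (σ2/2 : ℝ≥0) ≠ 0 := by
    have h : (0:ℝ≥0) < σ2/2 := by positivity
    exact h.ne'
  have hvr : ((σ2/2 : ℝ≥0) : ℝ) = (σ2:ℝ)/2 := by push_cast; ring
  -- the Bernoulli variables take values in {0,1} a.e.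
  have hX01 : ∀ k, ∀ᵐ ω ∂μ, X k ω = 0 ∨ X k ω = 1 := by
    intro k
    obtain ⟨h1, h0⟩ := hBern k
    have hmeas0 : MeasurableSet (X k ⁻¹' {0}) := hXmeas k (measurableSet_singleton 0)
    have hmeas1 : MeasurableSet (X k ⁻¹' {1}) := hXmeas k (measurableSet_singleton 1)
    have hdisj : Disjoint (X k ⁻¹' {0}) (X k ⁻¹' {1}) := by
      rw [Set.disjoint_left]
      intro ω hω0 hω1
      simp only [Set.mem_preimage, Set.mem_singleton_iff] at hω0 hω1
      rw [hω0] at hω1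
      norm_num at hω1
    have hunion : μ (X k ⁻¹' {0} ∪ X k ⁻¹' {1}) = 1 := by
      rw [measure_union hdisj hmeas1, h0, h1, ENNReal.add_halves]
    have hcompl : μ ((X k ⁻¹' {0} ∪ X k ⁻¹' {1})ᶜ) = 0 := by
      rw [measure_compl (hmeas0.union hmeas1) (measure_ne_top μ _), hunion, measure_univ,
        tsub_self]
    have hset : {ω | ¬(X k ω = 0 ∨ X k ω = 1)} = (X k ⁻¹' {0} ∪ X k ⁻¹' {1})ᶜ := by
      ext ω
      simp [not_or]
    rw [ae_iff, hset]
    exact hcompl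
  have hEX : ∀ k, ∫ ω, X k ω ∂μ = 1/2 := by
    intro k
    have hind : X k =ᵐ[μ] (X k ⁻¹' {1}).indicator (fun _ => (1:ℝ)) := by
      filter_upwards [hX01 k] with ω hω
      rw [Set.indicator_apply]
      by_cases hmem : ω ∈ X k ⁻¹' {1}
      · rw [if_pos hmem]
        simpa using hmem
      · rw [if_neg hmem]
        rcases hω with h | h
        · exact h
        · exact absurd (by simpa using h) hmem
    rw [integral_congr_ae hind,
      integral_indicator_const _ (hXmeas k (measurableSet_singleton 1)), measureReal_def, (hBern k).1]
    simp [ENNReal.toReal_div]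
  have hEX2 : ∀ k, ∫ ω, (X k ω)^2 ∂μ = 1/2 := by
    intro k
    have h : (fun ω => (X k ω)^2) =ᵐ[μ] X k := by
      filter_upwards [hX01 k] with ω hω
      rcases hω with h | h <;> rw [h] <;> norm_num
    rw [integral_congr_ae h, hEX k]
  have hL2 : ∀ k, MemLp (X k) 2 μ := by
    intro k
    refine (memLp_top_of_bound (hXmeas k).aestronglyMeasurable 1 ?_).mono_exponent le_top
    filter_upwards [hX01 k] with ω hω
    rcases hω with h | h <;> rw [h] <;> norm_num
  have hXint : ∀ k, Integrable (X k) μ := fun k => (hL2 k).integrable one_le_two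
  have ixx : ∀ j k, Integrable (fun ω => X j ω * X k ω) μ :=
    fun j k => lmmse_integrable_mul (hL2 j) (hL2 k)
  have hpair : ∀ j k, ∫ ω, X j ω * X k ω ∂μ = if j = k then (1/2:ℝ) else 1/4 := by
    intro j k
    by_cases hjk : j = k
    · subst hjk
      rw [if_pos rfl]
      have h : (fun ω => X j ω * X j ω) = fun ω => (X j ω)^2 :=
        funext fun ω => (sq (X j ω)).symm
      rw [h, hEX2 j]
    · rw [if_neg hjk]
      have h := (hindep.indepFun hjk).integral_mul_eq_mul_integral (hXmeas j).aestronglyMeasurable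
        (hXmeas k).aestronglyMeasurable
      have h2 : integral μ (X j * X k) = 1/4 := by
        rw [h, hEX j, hEX k]
        norm_num
      exact h2
  -- sums
  have hsumL2 : ∀ T : Finset (Fin K), MemLp (fun ω => ∑ k ∈ T, X k ω) 2 μ :=
    fun T => memLp_finset_sum T (fun k _ => hL2 k)
  have hEsum : ∀ T : Finset (Fin K), ∫ ω, (∑ k ∈ T, X k ω) ∂μ = (T.card:ℝ)/2 := by
    intro T
    rw [integral_finset_sum T (fun k _ => hXint k),
      Finset.sum_congr rfl (fun k _ => hEX k), Finset.sum_const, nsmul_eq_mul]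
    ring
  have hEsum2 : ∀ T : Finset (Fin K),
      ∫ ω, (∑ k ∈ T, X k ω)^2 ∂μ = ((T.card:ℝ)^2 + T.card)/4 := by
    intro T
    have h1 : (fun ω => (∑ k ∈ T, X k ω)^2) = fun ω => ∑ j ∈ T, ∑ k ∈ T, X j ω * X k ω := by
      funext ω
      rw [sq, Finset.sum_mul_sum]
    rw [h1, integral_finset_sum T (fun j _ => integrable_finset_sum T (fun k _ => ixx j k))]
    have h2 : ∀ j ∈ T, ∫ ω, ∑ k ∈ T, X j ω * X k ω ∂μ = (T.card:ℝ)/4 + 1/4 := by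
      intro j hj
      rw [integral_finset_sum T (fun k _ => ixx j k)]
      have h3 : ∀ k ∈ T, ∫ ω, X j ω * X k ω ∂μ = 1/4 + (if j = k then (1/4:ℝ) else 0) := by
        intro k _
        rw [hpair j k]
        split <;> norm_num
      rw [Finset.sum_congr rfl h3, Finset.sum_add_distrib, Finset.sum_const,
        Finset.sum_ite_eq, if_pos hj, nsmul_eq_mul]
      ring
    rw [Finset.sum_congr rfl h2, Finset.sum_const, nsmul_eq_mul]
    ring
  have hEUV : ∫ ω, (∑ k ∈ S, X k ω) * (∑ k ∈ Sᶜ, X k ω) ∂μ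
      = (S.card:ℝ) * (Sᶜ.card:ℝ) / 4 := by
    have h1 : (fun ω => (∑ k ∈ S, X k ω) * (∑ k ∈ Sᶜ, X k ω))
        = fun ω => ∑ j ∈ S, ∑ k ∈ Sᶜ, X j ω * X k ω := by
      funext ω
      rw [Finset.sum_mul_sum]
    rw [h1, integral_finset_sum S (fun j _ => integrable_finset_sum Sᶜ (fun k _ => ixx j k))]
    have h2 : ∀ j ∈ S, ∫ ω, ∑ k ∈ Sᶜ, X j ω * X k ω ∂μ = (Sᶜ.card:ℝ)/4 := by
      intro j hj
      rw [integral_finset_sum Sᶜ (fun k _ => ixx j k)]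
      have h3 : ∀ k ∈ Sᶜ, ∫ ω, X j ω * X k ω ∂μ = (1/4:ℝ) := by
        intro k hk
        have hjk : j ≠ k := fun h => (Finset.mem_compl.mp hk) (h ▸ hj)
        rw [hpair j k, if_neg hjk]
      rw [Finset.sum_congr rfl h3, Finset.sum_const, nsmul_eq_mul]
      ring
    rw [Finset.sum_congr rfl h2, Finset.sum_const, nsmul_eq_mul]
    ring
  -- the Gaussian noise
  have hNL2 : MemLp N 2 μ := by
    have h0 := lmmse_gauss_memL2 (σ2/2) hv
    rw [← hN] at h0
    exact (memLp_map_measure_iff aestronglyMeasurable_id hNmeas.aemeasurable).mp h0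
  have hEN : ∫ ω, N ω ∂μ = 0 := by
    have h2 : ∫ x, x ∂(μ.map N) = ∫ ω, N ω ∂μ :=
      integral_map (f := fun x => x) hNmeas.aemeasurable aestronglyMeasurable_id
    rw [hN] at h2
    rw [← h2, lmmse_gauss_mean _ hv]
  have hEN2 : ∫ ω, (N ω)^2 ∂μ = (σ2:ℝ)/2 := by
    have h2 : ∫ x, x^2 ∂(μ.map N) = ∫ ω, (N ω)^2 ∂μ :=
      integral_map (f := fun x => x^2) hNmeas.aemeasurable
        (measurable_id.pow_const 2).aestronglyMeasurable
    rw [hN] at h2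
    rw [← h2, lmmse_gauss_sq_moment _ hv, hvr]
  have hindepN : ∀ T : Finset (Fin K), IndepFun (fun ω => ∑ k ∈ T, X k ω) N μ := by
    intro T
    have hφ : Measurable (fun v : Fin K → ℝ => ∑ k ∈ T, v k) :=
      Finset.measurable_sum T (fun k _ => measurable_pi_apply k)
    exact hNindep.comp hφ measurable_id
  have hEsumN : ∀ T : Finset (Fin K), ∫ ω, (∑ k ∈ T, X k ω) * N ω ∂μ = 0 := by
    intro T
    have h := (hindepN T).integral_mul_eq_mul_integral
      (Finset.measurable_sum T (fun k _ => hXmeas k)).aestronglyMeasurable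
      hNmeas.aestronglyMeasurable
    have h2 : integral μ ((fun ω => ∑ k ∈ T, X k ω) * N) = 0 := by
      rw [h, hEN, mul_zero]
    exact h2
  -- cardinalities
  have hKmc : (K:ℝ) = (m:ℝ) + (Sᶜ.card:ℝ) := by
    have h := Finset.card_add_card_compl S
    rw [Fintype.card_fin, hm] at h
    exact_mod_cast h.symm
  -- rewrite the integrand
  set l : ℝ := Real.sqrt p * m / (2 * p * m + (σ2:ℝ)) with hl
  have hcongr : ∫ ω, ((∑ k, X k ω) -
        (l * (2 * Real.sqrt p * (∑ k ∈ S, X k ω) - Real.sqrt p * m + N ω)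
          + (K : ℝ) / 2)) ^ 2 ∂μ
      = ∫ ω, ((1 - 2*l*Real.sqrt p) * (∑ k ∈ S, X k ω) + (∑ k ∈ Sᶜ, X k ω)
          + (-l) * N ω + (l*Real.sqrt p*(m:ℝ) - (K:ℝ)/2)) ^ 2 ∂μ := by
    refine integral_congr_ae (ae_of_all _ fun ω => ?_)
    beta_reduce
    rw [← Finset.sum_add_sum_compl S (fun k => X k ω)]
    ring
  rw [hcongr, lmmse_expand_sq μ _ _ _ _ _ _ (hsumL2 S) (hsumL2 Sᶜ) hNL2,
    hEsum2 S, hEsum2 Sᶜ, hEN2, hEUV, hEsumN S, hEsumN Sᶜ, hEsum S, hEsum Sᶜ, hEN, hm]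
  -- final algebra
  rw [hl, hKmc]
  set s : ℝ := Real.sqrt p with hs
  have hps : p = s^2 := by rw [hs, Real.sq_sqrt hp.le]
  rw [hps]
  have hs0 : 0 < s := Real.sqrt_pos.mpr hp
  have hd1 : 2*s^2*(m:ℝ) + (σ2:ℝ) ≠ 0 := by positivity
  have hd2 : 8*s^2*(m:ℝ) + 4*(σ2:ℝ) ≠ 0 := by positivity
  field_simp
  ring
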